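/- Let Y_1,…,Y_n be i.i.d. random variables in a measurable space S, h : S^m → ℝ a symmetric measurable function with E|h(Y_1,…,Y_m)|^p < ∞ for some p ≥ 1, and m ≤ n. Then ‖U_n h(Y_1,…,Y_n) − E h(Y_1,…,Y_m)‖_{L_p} ≤ ‖h(Y_1,…,Y_m) − E h(Y_1,…,Y_m)‖_{L_p}, where U_n h is the U-statistic of order m with kernel h. -/

import Mathlib

open MeasureTheory
open scoped ENNReal NNReal

lemma aux_map_tuple_eq_pi
    {S : Type*} [MeasurableSpace S]
    {Ω : Type*} [MeasurableSpace Ω] {μ : Measure Ω} [IsProbabilityMeasure μ]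
    {n m : ℕ} (Y : Fin n → Ω → S) (hYmeas : ∀ i, Measurable (Y i))
    (hindep : ProbabilityTheory.iIndepFun Y μ)
    (g : Fin m → Fin n) (hg : Function.Injective g) :
    Measure.map (fun ω (i : Fin m) => Y (g i) ω) μ
      = Measure.pi (fun i => Measure.map (Y (g i)) μ) := by
  classical
  haveI : ∀ i : Fin m, IsProbabilityMeasure (Measure.map (Y (g i)) μ) :=
    fun i => Measure.isProbabilityMeasure_map (hYmeas _).aemeasurable
  refine (Measure.pi_eq fun s hs => ?_).symm
  have hT : Measurable (fun ω (i : Fin m) => Y (g i) ω) :=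
    measurable_pi_lambda _ fun i => hYmeas _
  rw [Measure.map_apply hT (MeasurableSet.univ_pi hs)]
  set t : Fin n → Set S := fun j => if hj : ∃ i, g i = j then s hj.choose else Set.univ with ht
  have htg : ∀ i, t (g i) = s i := by
    intro i
    have hj : ∃ i', g i' = g i := ⟨i, rfl⟩
    simp only [ht, dif_pos hj]
    exact congrArg s (hg hj.choose_spec)
  have htmeas : ∀ j, MeasurableSet (t j) := by
    intro j
    by_cases hj : ∃ i, g i = j
    · simp only [ht, dif_pos hj]; exact hs _
    · simp only [ht, dif_neg hj]; exact MeasurableSet.univ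
  have hpre : (fun ω (i : Fin m) => Y (g i) ω) ⁻¹' (Set.pi Set.univ s)
      = ⋂ j ∈ Finset.univ.map ⟨g, hg⟩, Y j ⁻¹' t j := by
    ext ω
    simp only [Set.mem_preimage, Set.mem_pi, Set.mem_univ, forall_true_left,
      Set.mem_iInter, Finset.mem_map, Finset.mem_univ, true_and,
      Function.Embedding.coeFn_mk]
    constructor
    · rintro hx j ⟨i, rfl⟩
      rw [htg]; exact hx i
    · intro hx i
      have := hx (g i) ⟨i, rfl⟩
      rwa [htg] at this
  rw [hpre, hindep.measure_inter_preimage_eq_mul _ (fun j _ => htmeas j),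
    Finset.prod_map]
  refine Finset.prod_congr rfl fun i _ => ?_
  rw [Function.Embedding.coeFn_mk, htg, Measure.map_apply (hYmeas _) (hs i)]

/-- Jensen-type `L_p` contraction for U-statistics: for i.i.d. `Y₁,…,Y_n` and a symmetric
kernel `h` of `m ≤ n` variables with `E|h|^p < ∞`,
`E|U_n h − E h|^p ≤ E|h(Y₁,…,Y_m)− E h|^p`. -/
theorem u_statistic_Lp_contraction
    {S : Type*} [MeasurableSpace S]
    {Ω : Type*} [MeasurableSpace Ω] (μ : Measure Ω) [IsProbabilityMeasure μ]
    (n m : ℕ) (hm : 0 < m) (hmn : m ≤ n)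
    (Y : Fin n → Ω → S) (hYmeas : ∀ i, Measurable (Y i))
    (hindep : ProbabilityTheory.iIndepFun Y μ)
    (hident : ∀ i j, Measure.map (Y i) μ = Measure.map (Y j) μ)
    (h : (Fin m → S) → ℝ) (hhmeas : Measurable h)
    (hsymm : ∀ (σ : Equiv.Perm (Fin m)) (y : Fin m → S), h (y ∘ σ) = h y)
    (p : ℝ) (hp : 1 ≤ p)
    (hint : Integrable (fun ω => h (fun i => Y (Fin.castLE hmn i) ω)) μ)
    (hintp : Integrable (fun ω => |h (fun i => Y (Fin.castLE hmn i) ω)| ^ p) μ) :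
    (∫ ω, |(↑(Fintype.card (Fin m ↪ Fin n)))⁻¹ *
            (∑ e : Fin m ↪ Fin n, h (fun i => Y (e i) ω)) -
          ∫ ω', h (fun i => Y (Fin.castLE hmn i) ω') ∂μ| ^ p ∂μ)
      ≤ ∫ ω, |h (fun i => Y (Fin.castLE hmn i) ω) -
          ∫ ω', h (fun i => Y (Fin.castLE hmn i) ω') ∂μ| ^ p ∂μ := by
  classical
  set c : ℝ := ∫ ω', h (fun i => Y (Fin.castLE hmn i) ω') ∂μ with hc
  set N : ℕ := Fintype.card (Fin m ↪ Fin n) with hN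
  have hp0 : 0 < p := lt_of_lt_of_le one_pos hp
  set q : ℝ≥0∞ := ENNReal.ofReal p with hq
  have hq0 : q ≠ 0 := by simp [hq, ENNReal.ofReal_eq_zero, not_le, hp0]
  have hqt : q ≠ ∞ := ENNReal.ofReal_ne_top
  have hq1 : 1 ≤ q := by
    rw [hq, ← ENNReal.ofReal_one]
    exact ENNReal.ofReal_le_ofReal hp
  have hqr : q.toReal = p := ENNReal.toReal_ofReal hp0.le
  have hNpos : 0 < N := Fintype.card_pos_iff.mpr
    ⟨⟨Fin.castLE hmn, Fin.castLE_injective hmn⟩⟩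
  have hNne : ((N : ℝ)) ≠ 0 := Nat.cast_ne_zero.mpr hNpos.ne'
  -- measurability of the kernels
  have hfe_meas : ∀ g : Fin m → Fin n, Measurable fun ω => h (fun i => Y (g i) ω) :=
    fun g => hhmeas.comp (measurable_pi_lambda _ fun i => hYmeas _)
  -- identical distribution of all tuples
  have hid : ∀ e : Fin m ↪ Fin n,
      ProbabilityTheory.IdentDistrib (fun ω => h (fun i => Y (e i) ω))
        (fun ω => h (fun i => Y (Fin.castLE hmn i) ω)) μ μ := by
    intro e
    have h1 := aux_map_tuple_eq_pi Y hYmeas hindep e e.injective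
    have h2 := aux_map_tuple_eq_pi Y hYmeas hindep (Fin.castLE hmn) (Fin.castLE_injective hmn)
    have h3 : Measure.map (fun ω (i : Fin m) => Y (e i) ω) μ
        = Measure.map (fun ω (i : Fin m) => Y (Fin.castLE hmn i) ω) μ := by
      rw [h1, h2]
      exact congrArg Measure.pi (funext fun i => hident _ _)
    have hid0 : ProbabilityTheory.IdentDistrib (fun ω (i : Fin m) => Y (e i) ω)
        (fun ω (i : Fin m) => Y (Fin.castLE hmn i) ω) μ μ :=
      ⟨(measurable_pi_lambda _ fun i => hYmeas _).aemeasurable,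
       (measurable_pi_lambda _ fun i => hYmeas _).aemeasurable, h3⟩
    exact hid0.comp hhmeas
  -- Memℒp of the basic kernel
  have hfmem : MemLp (fun ω => h (fun i => Y (Fin.castLE hmn i) ω)) q μ := by
    have hiff := memLp_norm_rpow_iff (μ := μ) (q := q) (p := q)
      (hfe_meas (Fin.castLE hmn)).aestronglyMeasurable hq0 hqt
    rw [ENNReal.div_self hq0 hqt, memLp_one_iff_integrable] at hiff
    apply hiff.mp
    simpa [hqr, Real.norm_eq_abs] using hintp
  -- centered functions
  set F : Ω → ℝ := fun ω => h (fun i => Y (Fin.castLE hmn i) ω) - c with hF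
  set Fe : (Fin m ↪ Fin n) → Ω → ℝ := fun e ω => h (fun i => Y (e i) ω) - c with hFe
  have hidc : ∀ e : Fin m ↪ Fin n, ProbabilityTheory.IdentDistrib (Fe e) F μ μ :=
    fun e => (hid e).comp (measurable_id.sub_const c)
  have hFmem : MemLp F q μ := hfmem.sub (memLp_const c)
  have hFemem : ∀ e : Fin m ↪ Fin n, MemLp (Fe e) q μ :=
    fun e => ((hidc e).symm.memLp_snd hFmem)
  -- rewrite the U-statistic as a sum of centered terms
  have hGeq : (fun ω => (N : ℝ)⁻¹ * (∑ e : Fin m ↪ Fin n, h (fun i => Y (e i) ω)) - c)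
      = ∑ e : Fin m ↪ Fin n, (fun ω => (N : ℝ)⁻¹ * (Fe e ω)) := by
    funext ω
    rw [Finset.sum_apply]
    simp only [hFe]
    rw [← Finset.mul_sum, Finset.sum_sub_distrib, Finset.sum_const, Finset.card_univ,
      ← hN, mul_sub, nsmul_eq_mul, ← mul_assoc, inv_mul_cancel₀ hNne, one_mul]
  set G : Ω → ℝ := fun ω => (N : ℝ)⁻¹ * (∑ e : Fin m ↪ Fin n, h (fun i => Y (e i) ω)) - c
    with hG
  have hGmem : MemLp G q μ := by
    rw [hGeq]
    exact memLp_finset_sum' _ fun e _ => ((hFemem e).const_mul _)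
  -- the eLpNorm inequality
  have hnn : (‖((N : ℝ))⁻¹‖₊ : ℝ≥0∞) = ((N : ℝ≥0∞))⁻¹ := by
    rw [nnnorm_inv, Real.nnnorm_natCast, ENNReal.coe_inv (by exact_mod_cast hNpos.ne')]
    simp
  have key : eLpNorm G q μ ≤ eLpNorm F q μ := by
    rw [hGeq]
    calc eLpNorm (∑ e : Fin m ↪ Fin n, (fun ω => (N : ℝ)⁻¹ * (Fe e ω))) q μ
        ≤ ∑ e : Fin m ↪ Fin n, eLpNorm (fun ω => (N : ℝ)⁻¹ * (Fe e ω)) q μ :=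
          eLpNorm_sum_le (fun e _ => ((hFemem e).const_mul _).aestronglyMeasurable) hq1
      _ = ∑ e : Fin m ↪ Fin n, (‖((N : ℝ))⁻¹‖₊ : ℝ≥0∞) * eLpNorm (Fe e) q μ := by
          refine Finset.sum_congr rfl fun e _ => ?_
          have : (fun ω => (N : ℝ)⁻¹ * (Fe e ω)) = ((N : ℝ)⁻¹) • (Fe e) := rfl
          rw [this, eLpNorm_const_smul, enorm_eq_nnnorm]
      _ = ∑ _e : Fin m ↪ Fin n, (‖((N : ℝ))⁻¹‖₊ : ℝ≥0∞) * eLpNorm F q μ := by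
          refine Finset.sum_congr rfl fun e _ => ?_
          rw [(hidc e).eLpNorm_eq]
      _ = eLpNorm F q μ := by
          rw [Finset.sum_const, Finset.card_univ, ← hN, nsmul_eq_mul, hnn, ← mul_assoc,
            ENNReal.mul_inv_cancel (by exact_mod_cast hNpos.ne') (by simp), one_mul]
  -- convert to integrals
  have h1 : eLpNorm G q μ = ENNReal.ofReal ((∫ ω, ‖G ω‖ ^ p ∂μ) ^ p⁻¹) := by
    simpa [hqr] using hGmem.eLpNorm_eq_integral_rpow_norm hq0 hqt
  have h2 : eLpNorm F q μ = ENNReal.ofReal ((∫ ω, ‖F ω‖ ^ p ∂μ) ^ p⁻¹) := by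
    simpa [hqr] using hFmem.eLpNorm_eq_integral_rpow_norm hq0 hqt
  have hA : 0 ≤ ∫ ω, ‖G ω‖ ^ p ∂μ :=
    integral_nonneg fun ω => Real.rpow_nonneg (norm_nonneg _) _
  have hB : 0 ≤ ∫ ω, ‖F ω‖ ^ p ∂μ :=
    integral_nonneg fun ω => Real.rpow_nonneg (norm_nonneg _) _
  rw [h1, h2] at key
  have key2 : (∫ ω, ‖G ω‖ ^ p ∂μ) ^ p⁻¹ ≤ (∫ ω, ‖F ω‖ ^ p ∂μ) ^ p⁻¹ :=
    (ENNReal.ofReal_le_ofReal_iff (Real.rpow_nonneg hB _)).mp key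
  have key3 : (∫ ω, ‖G ω‖ ^ p ∂μ) ≤ ∫ ω, ‖F ω‖ ^ p ∂μ := by
    have := Real.rpow_le_rpow (Real.rpow_nonneg hA _) key2 hp0.le
    rwa [← Real.rpow_mul hA, ← Real.rpow_mul hB, inv_mul_cancel₀ hp0.ne',
      Real.rpow_one, Real.rpow_one] at this
  simpa [hG, hF, Real.norm_eq_abs] using key3
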